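/- If P = [x_1,...,x_m] is a pointer list and i, j are distinct indices with |x_i| = |x_j|, then x_i and x_j have the same sign if and only if i and j have different parity. -/
import Mathlib


private lemma sum_range_two_mul (f : ℕ → ℕ) (n : ℕ) :
    ∑ k ∈ Finset.range (2 * n), f k
      = ∑ t ∈ Finset.range n, (f (2 * t) + f (2 * t + 1)) := by
  induction n with
  | zero => simp
  | succ n ih =>
    rw [Finset.sum_range_succ, show 2 * (n + 1) = (2 * n) + 1 + 1 by ring,
      Finset.sum_range_succ, Finset.sum_range_succ, ih]
    omega

private lemma even_card_pairing (A : ℕ → ℤ) :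
    ∀ n (s : Finset ℕ), s.card = n →
      (∀ k ∈ s, ∃! l, l ∈ s ∧ l ≠ k ∧ A l = A k) → Even n := by
  intro n
  induction n using Nat.strong_induction_on with
  | _ n ih =>
    intro s hcard h
    rcases Finset.eq_empty_or_nonempty s with rfl | ⟨a, ha⟩
    · simp at hcard
      simp [← hcard]
    · obtain ⟨b, ⟨hbs, hba, hAb⟩, hbu⟩ := h a ha
      set s' : Finset ℕ := (s.erase a).erase b with hs'
      have hsub : ∀ k ∈ s', k ∈ s := by
        intro k hk
        exact Finset.mem_of_mem_erase (Finset.mem_of_mem_erase hk)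
      have hmem : ∀ k ∈ s', k ≠ a ∧ k ≠ b := by
        intro k hk
        exact ⟨Finset.ne_of_mem_erase (Finset.mem_of_mem_erase hk),
          Finset.ne_of_mem_erase hk⟩
      have h' : ∀ k ∈ s', ∃! l, l ∈ s' ∧ l ≠ k ∧ A l = A k := by
        intro k hk
        obtain ⟨hka, hkb⟩ := hmem k hk
        obtain ⟨l, ⟨hls, hlk, hlA⟩, hlu⟩ := h k (hsub k hk)
        have hla : l ≠ a := by
          rintro rfl
          exact hkb (hbu k ⟨hsub k hk, hka, hlA.symm⟩)
        have hlb : l ≠ b := by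
          intro he
          obtain ⟨c, _, hcu⟩ := h b hbs
          have h1 : k = c := hcu k ⟨hsub k hk, hkb, (he ▸ hlA).symm⟩
          have h2 : a = c := hcu a ⟨ha, fun e => hba e.symm, hAb.symm⟩
          exact hka (h1.trans h2.symm)
        refine ⟨l, ⟨?_, hlk, hlA⟩, fun y hy => hlu y ⟨hsub y hy.1, hy.2⟩⟩
        exact Finset.mem_erase.2 ⟨hlb, Finset.mem_erase.2 ⟨hla, hls⟩⟩
      have hbea : b ∈ s.erase a := Finset.mem_erase.2 ⟨hba, hbs⟩
      have hcard' : s'.card = n - 2 := by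
        rw [hs', Finset.card_erase_of_mem hbea, Finset.card_erase_of_mem ha, hcard]
        omega
      have hn2 : 2 ≤ n := by
        have h1 : (s.erase a).card = n - 1 := by
          rw [Finset.card_erase_of_mem ha, hcard]
        have h2 : 0 < (s.erase a).card := Finset.card_pos.2 ⟨b, hbea⟩
        have h3 : 0 < n := hcard ▸ Finset.card_pos.2 ⟨a, ha⟩
        omega
      have := ih (n - 2) (by omega) s' hcard' h'
      rw [Nat.even_iff] at this ⊢
      omega

private lemma hfin_aux (a b : ℤ) (pa pb : ℕ) (hia : 0 < a ↔ pa % 2 = 1)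
    (hib : 0 < b ↔ pb % 2 = 0) (ha : a ≠ 0) (hb : b ≠ 0) :
    0 < a * b ↔ pa % 2 ≠ pb % 2 := by
  rcases ha.lt_or_gt with h | h <;> rcases hb.lt_or_gt with h' | h'
  · refine iff_of_true (mul_pos_of_neg_of_neg h h') ?_
    have q1 : pa % 2 ≠ 1 := fun hq => absurd (hia.2 hq) (not_lt.2 h.le)
    have q2 : pb % 2 ≠ 0 := fun hq => absurd (hib.2 hq) (not_lt.2 h'.le)
    omega
  · refine iff_of_false (not_lt.2 (by nlinarith : a * b ≤ 0)) ?_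
    have q1 : pa % 2 ≠ 1 := fun hq => absurd (hia.2 hq) (not_lt.2 h.le)
    have q2 : pb % 2 = 0 := hib.1 h'
    omega
  · refine iff_of_false (not_lt.2 (by nlinarith : a * b ≤ 0)) ?_
    have q1 : pa % 2 = 1 := hia.1 h
    have q2 : pb % 2 ≠ 0 := fun hq => absurd (hib.2 hq) (not_lt.2 h'.le)
    omega
  · refine iff_of_true (mul_pos h h') ?_
    have q1 : pa % 2 = 1 := hia.1 h
    have q2 : pb % 2 = 0 := hib.1 h'
    omega

private lemma key_lemma (m : ℕ) (x : ℕ → ℤ) (hm2 : m % 2 = 0)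
    (hmin : ∃! i, i < m ∧ ∀ j < m, |x i| ≤ |x j|)
    (hmax : ∃! i, i < m ∧ ∀ j < m, |x j| ≤ |x i|)
    (hmid : ∀ i < m, (∃ j < m, |x j| < |x i|) → (∃ j < m, |x i| < |x j|) →
        ∃! j, j < m ∧ j ≠ i ∧ |x j| = |x i|)
    (hpair : ∀ i, i % 2 = 0 → i + 1 < m → x i ≤ x (i + 1) ∧ 0 < x i * x (i + 1))
    (hbet : ∀ i, i % 2 = 0 → i + 1 < m →
        ¬ ∃ j < m, (|x i| < |x j| ∧ |x j| < |x (i + 1)|) ∨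
          (|x (i + 1)| < |x j| ∧ |x j| < |x i|))
    (i j : ℕ) (hi : i < m) (hj : j < m) (hij : i ≠ j) (habs : |x i| = |x j|) :
    0 < x i * x j ↔ i % 2 ≠ j % 2 := by
  -- every entry is nonzero
  have hnz : ∀ k, k < m → x k ≠ 0 := by
    intro k hk h0
    have hp := (hpair (2 * (k / 2)) (by omega) (by omega)).2
    have hcase : k = 2 * (k / 2) ∨ k = 2 * (k / 2) + 1 := by omega
    rcases hcase with h | h <;> rw [← h, h0] at hp <;> simp at hp
  -- sign characterization within a pair
  have hsign : ∀ k k', k < m → k' ≠ k → k' / 2 = k / 2 →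
      ((|x k'| < |x k| → (0 < x k ↔ k % 2 = 1)) ∧
       (|x k| < |x k'| → (0 < x k ↔ k % 2 = 0))) := by
    intro k k' hk hne hdiv
    obtain ⟨p, hp0, hpm, hcase⟩ : ∃ p, p % 2 = 0 ∧ p + 1 < m ∧
        ((k = p ∧ k' = p + 1) ∨ (k' = p ∧ k = p + 1)) :=
      ⟨2 * (k / 2), by omega, by omega, by omega⟩
    have hp := hpair p hp0 hpm
    have hle := hp.1
    rcases pos_and_pos_or_neg_and_neg_of_mul_pos hp.2 with ⟨h1, h2⟩ | ⟨h1, h2⟩ <;>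
      rcases hcase with ⟨rfl, rfl⟩ | ⟨rfl, rfl⟩
    · rw [abs_of_pos h1, abs_of_pos h2]
      exact ⟨fun h => absurd h (not_lt.2 hle),
        fun _ => iff_of_true h1 (by omega)⟩
    · rw [abs_of_pos h1, abs_of_pos h2]
      exact ⟨fun _ => iff_of_true h2 (by omega),
        fun h => absurd h (not_lt.2 hle)⟩
    · rw [abs_of_neg h1, abs_of_neg h2]
      exact ⟨fun _ => iff_of_false (not_lt.2 h1.le) (by omega),
        fun h => absurd h (by simp; linarith)⟩
    · rw [abs_of_neg h1, abs_of_neg h2]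
      exact ⟨fun h => absurd h (by simp; linarith),
        fun _ => iff_of_false (not_lt.2 h2.le) (by omega)⟩
  by_cases hsame : i / 2 = j / 2
  · -- same pair
    obtain ⟨p, hp0, hpm, hcase⟩ : ∃ p, p % 2 = 0 ∧ p + 1 < m ∧
        ((i = p ∧ j = p + 1) ∨ (j = p ∧ i = p + 1)) :=
      ⟨2 * (i / 2), by omega, by omega, by omega⟩
    have hp := (hpair p hp0 hpm).2
    rcases hcase with ⟨rfl, rfl⟩ | ⟨rfl, rfl⟩
    · exact iff_of_true hp (by omega)
    · exact iff_of_true (by rw [mul_comm]; exact hp) (by omega)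
  · -- different pairs
    obtain ⟨i0, ⟨hi0m, hi0min⟩, hi0u⟩ := hmin
    obtain ⟨i1, ⟨hi1m, hi1max⟩, hi1u⟩ := hmax
    have hmin_lt : |x i0| < |x i| := by
      rcases lt_or_eq_of_le (hi0min i hi) with h | h
      · exact h
      · exfalso
        have h1 : i = i0 := hi0u i ⟨hi, fun k hk => by rw [← h]; exact hi0min k hk⟩
        have h2 : j = i0 := hi0u j ⟨hj, fun k hk => by rw [← habs, ← h]; exact hi0min k hk⟩
        exact hij (h1.trans h2.symm)
    have hmax_gt : |x i| < |x i1| := by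
      rcases lt_or_eq_of_le (hi1max i hi) with h | h
      · exact h
      · exfalso
        have h1 : i = i1 := hi1u i ⟨hi, fun k hk => by rw [h]; exact hi1max k hk⟩
        have h2 : j = i1 := hi1u j ⟨hj, fun k hk => by rw [← habs, h]; exact hi1max k hk⟩
        exact hij (h1.trans h2.symm)
    have honly : ∀ k, k < m → |x k| = |x i| → k = i ∨ k = j := by
      intro k hk hkv
      by_cases hki : k = i
      · exact Or.inl hki
      · obtain ⟨l, _, hlu⟩ := hmid i hi ⟨i0, hi0m, hmin_lt⟩ ⟨i1, hi1m, hmax_gt⟩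
        have hjl : j = l := hlu j ⟨hj, Ne.symm hij, habs.symm⟩
        have hkl : k = l := hlu k ⟨hk, hki, hkv⟩
        exact Or.inr (hkl.trans hjl.symm)
    set S : Finset ℕ := (Finset.range m).filter (fun k => |x k| < |x i|) with hS
    have hi0S : i0 ∈ S := by
      rw [hS]; exact Finset.mem_filter.2 ⟨Finset.mem_range.2 hi0m, hmin_lt⟩
    have heven : Even ((S.erase i0).card) := by
      refine even_card_pairing (fun k => |x k|) _ _ rfl ?_
      intro k hk
      obtain ⟨hki0, hkS⟩ := Finset.mem_erase.1 hk
      obtain ⟨hkr, hkv⟩ := Finset.mem_filter.1 hkS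
      have hkm := Finset.mem_range.1 hkr
      have hkmin : |x i0| < |x k| := by
        rcases lt_or_eq_of_le (hi0min k hkm) with h | h
        · exact h
        · exact absurd (hi0u k ⟨hkm, fun l hl => by rw [← h]; exact hi0min l hl⟩) hki0
      obtain ⟨l, ⟨hlm, hlk, hlA⟩, hlu⟩ := hmid k hkm ⟨i0, hi0m, hkmin⟩ ⟨i, hi, hkv⟩
      have hlS : l ∈ S.erase i0 := by
        refine Finset.mem_erase.2 ⟨?_, Finset.mem_filter.2
          ⟨Finset.mem_range.2 hlm, by rw [hlA]; exact hkv⟩⟩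
        intro he
        rw [he] at hlA
        exact absurd hlA.symm (ne_of_gt hkmin)
      exact ⟨l, ⟨hlS, hlk, hlA⟩, fun y hy =>
        hlu y ⟨Finset.mem_range.1 (Finset.mem_filter.1 (Finset.mem_erase.1 hy.1).2).1, hy.2⟩⟩
    have hcard_odd : S.card % 2 = 1 := by
      have h1 : S.card = (S.erase i0).card + 1 := (Finset.card_erase_add_one hi0S).symm
      rw [Nat.even_iff] at heven
      omega
    have hm' : m = 2 * (m / 2) := by omega
    have hsum : S.card = ∑ t ∈ Finset.range (m / 2),
        ((if |x (2 * t)| < |x i| then 1 else 0) +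
          (if |x (2 * t + 1)| < |x i| then 1 else 0)) := by
      rw [hS, Finset.card_filter]
      conv_lhs => rw [hm']
      exact sum_range_two_mul _ _
    have htir : i / 2 ∈ Finset.range (m / 2) := Finset.mem_range.2 (by omega)
    have htjr : j / 2 ∈ (Finset.range (m / 2)).erase (i / 2) :=
      Finset.mem_erase.2 ⟨fun e => hsame e.symm, Finset.mem_range.2 (by omega)⟩
    have hsplit2 : ((if |x (2 * (i / 2))| < |x i| then 1 else 0) +
          (if |x (2 * (i / 2) + 1)| < |x i| then 1 else 0)) +
        ∑ t ∈ (Finset.range (m / 2)).erase (i / 2),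
          ((if |x (2 * t)| < |x i| then 1 else 0) +
            (if |x (2 * t + 1)| < |x i| then 1 else 0)) =
        ∑ t ∈ Finset.range (m / 2),
          ((if |x (2 * t)| < |x i| then 1 else 0) +
            (if |x (2 * t + 1)| < |x i| then 1 else 0)) :=
      Finset.add_sum_erase _ (fun t => (if |x (2 * t)| < |x i| then 1 else 0) + (if |x (2 * t + 1)| < |x i| then 1 else 0)) htir
    have hsplit : ((if |x (2 * (j / 2))| < |x i| then 1 else 0) +
          (if |x (2 * (j / 2) + 1)| < |x i| then 1 else 0)) +
        ∑ t ∈ ((Finset.range (m / 2)).erase (i / 2)).erase (j / 2),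
          ((if |x (2 * t)| < |x i| then 1 else 0) +
            (if |x (2 * t + 1)| < |x i| then 1 else 0)) =
        ∑ t ∈ (Finset.range (m / 2)).erase (i / 2),
          ((if |x (2 * t)| < |x i| then 1 else 0) +
            (if |x (2 * t + 1)| < |x i| then 1 else 0)) :=
      Finset.add_sum_erase _ (fun t => (if |x (2 * t)| < |x i| then 1 else 0) + (if |x (2 * t + 1)| < |x i| then 1 else 0)) htjr
    have hrest : (∑ t ∈ ((Finset.range (m / 2)).erase (i / 2)).erase (j / 2),
        ((if |x (2 * t)| < |x i| then 1 else 0) +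
          (if |x (2 * t + 1)| < |x i| then 1 else 0))) % 2 = 0 := by
      rw [Finset.sum_nat_mod]
      have hz : ∀ t ∈ ((Finset.range (m / 2)).erase (i / 2)).erase (j / 2),
          ((if |x (2 * t)| < |x i| then 1 else 0) +
            (if |x (2 * t + 1)| < |x i| then 1 else 0)) % 2 = 0 := by
        intro t ht
        obtain ⟨htj, ht2⟩ := Finset.mem_erase.1 ht
        obtain ⟨hti, ht3⟩ := Finset.mem_erase.1 ht2
        have htm := Finset.mem_range.1 ht3
        have hne1 : |x (2 * t)| ≠ |x i| := by
          intro he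
          rcases honly (2 * t) (by omega) he with h | h
          · exact hti (by omega)
          · exact htj (by omega)
        have hne2 : |x (2 * t + 1)| ≠ |x i| := by
          intro he
          rcases honly (2 * t + 1) (by omega) he with h | h
          · exact hti (by omega)
          · exact htj (by omega)
        have hiff : |x (2 * t)| < |x i| ↔ |x (2 * t + 1)| < |x i| := by
          constructor
          · intro h1
            by_contra h2
            have h2' : |x i| < |x (2 * t + 1)| := lt_of_le_of_ne (not_lt.1 h2) (Ne.symm hne2)
            exact hbet (2 * t) (by omega) (by omega) ⟨i, hi, Or.inl ⟨h1, h2'⟩⟩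
          · intro h1
            by_contra h2
            have h2' : |x i| < |x (2 * t)| := lt_of_le_of_ne (not_lt.1 h2) (Ne.symm hne1)
            exact hbet (2 * t) (by omega) (by omega) ⟨i, hi, Or.inr ⟨h1, h2'⟩⟩
        by_cases hb1 : |x (2 * t)| < |x i|
        · rw [if_pos hb1, if_pos (hiff.1 hb1)]
        · rw [if_neg hb1, if_neg (fun hc => hb1 (hiff.2 hc))]
      rw [Finset.sum_congr rfl hz, Finset.sum_const_zero]
      rfl
    obtain ⟨i', hi'm, hi'ne, hi'div, hi'j⟩ :
        ∃ i', i' < m ∧ i' ≠ i ∧ i' / 2 = i / 2 ∧ i' ≠ j := by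
      rcases Nat.even_or_odd i with he | ho
      · rw [Nat.even_iff] at he; exact ⟨i + 1, by omega, by omega, by omega, by omega⟩
      · rw [Nat.odd_iff] at ho; exact ⟨i - 1, by omega, by omega, by omega, by omega⟩
    obtain ⟨j', hj'm, hj'ne, hj'div, hj'i⟩ :
        ∃ j', j' < m ∧ j' ≠ j ∧ j' / 2 = j / 2 ∧ j' ≠ i := by
      rcases Nat.even_or_odd j with he | ho
      · rw [Nat.even_iff] at he; exact ⟨j + 1, by omega, by omega, by omega, by omega⟩
      · rw [Nat.odd_iff] at ho; exact ⟨j - 1, by omega, by omega, by omega, by omega⟩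
    have hvi' : |x i'| ≠ |x i| := by
      intro he
      rcases honly i' hi'm he with h | h
      exacts [hi'ne h, hi'j h]
    have hvj' : |x j'| ≠ |x i| := by
      intro he
      rcases honly j' hj'm he with h | h
      exacts [hj'i h, hj'ne h]
    have hdisj_i : (i = 2 * (i / 2) ∧ i' = 2 * (i / 2) + 1) ∨
        (i' = 2 * (i / 2) ∧ i = 2 * (i / 2) + 1) := by omega
    have hci : (if |x (2 * (i / 2))| < |x i| then 1 else 0) +
        (if |x (2 * (i / 2) + 1)| < |x i| then (1 : ℕ) else 0) =
        (if |x i'| < |x i| then 1 else 0) := by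
      rcases hdisj_i with ⟨ha, hb⟩ | ⟨ha, hb⟩
      · rw [← hb, ← ha, if_neg (lt_irrefl _), Nat.zero_add]
      · rw [← hb, ← ha, if_neg (lt_irrefl _), Nat.add_zero]
    have hdisj_j : (j = 2 * (j / 2) ∧ j' = 2 * (j / 2) + 1) ∨
        (j' = 2 * (j / 2) ∧ j = 2 * (j / 2) + 1) := by omega
    have hnj : ¬ |x j| < |x i| := by rw [habs]; exact lt_irrefl _
    have hcj : (if |x (2 * (j / 2))| < |x i| then 1 else 0) +
        (if |x (2 * (j / 2) + 1)| < |x i| then (1 : ℕ) else 0) =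
        (if |x j'| < |x i| then 1 else 0) := by
      rcases hdisj_j with ⟨ha, hb⟩ | ⟨ha, hb⟩
      · rw [← hb, ← ha, if_neg hnj, Nat.zero_add]
      · rw [← hb, ← ha, if_neg hnj, Nat.add_zero]
    have hkey : ((if |x i'| < |x i| then (1 : ℕ) else 0) +
        (if |x j'| < |x i| then 1 else 0)) % 2 = 1 := by omega
    by_cases hA : |x i'| < |x i| <;> by_cases hB : |x j'| < |x i|
    · rw [if_pos hA, if_pos hB] at hkey; exact absurd hkey (by norm_num)
    · have hBgt : |x i| < |x j'| := lt_of_le_of_ne (not_lt.1 hB) (Ne.symm hvj')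
      have hsi := (hsign i i' hi hi'ne hi'div).1 hA
      have hsj := (hsign j j' hj hj'ne hj'div).2 (by rw [← habs]; exact hBgt)
      exact hfin_aux (x i) (x j) i j hsi hsj (hnz i hi) (hnz j hj)
    · have hAgt : |x i| < |x i'| := lt_of_le_of_ne (not_lt.1 hA) (Ne.symm hvi')
      have hsi := (hsign i i' hi hi'ne hi'div).2 hAgt
      have hsj := (hsign j j' hj hj'ne hj'div).1 (by rw [← habs]; exact hB)
      rw [mul_comm]
      exact (hfin_aux (x j) (x i) j i hsj hsi (hnz j hj) (hnz i hi)).trans ne_comm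
    · rw [if_neg hA, if_neg hB] at hkey; exact absurd hkey (by norm_num)



/-- A finite sequence of integers (0-indexed list) is a *pointer list*:
(1) even positive length; (2) unique index of minimum absolute value;
(3) unique index of maximum absolute value; (4) each intermediate absolute
value occurs at exactly one other index; (5) for each even (0-based) index i,
x i ≤ x (i+1) and x i * x (i+1) > 0; (6) for each even (0-based) index i no
entry has absolute value strictly between |x i| and |x (i+1)|. -/
def IsPointerList (P : List ℤ) : Prop :=
  P.length % 2 = 0 ∧ 0 < P.length ∧
  (∃! i, i < P.length ∧ ∀ j < P.length, |P.getD i 0| ≤ |P.getD j 0|) ∧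
  (∃! i, i < P.length ∧ ∀ j < P.length, |P.getD j 0| ≤ |P.getD i 0|) ∧
  (∀ i < P.length, (∃ j < P.length, |P.getD j 0| < |P.getD i 0|) →
      (∃ j < P.length, |P.getD i 0| < |P.getD j 0|) →
      ∃! j, j < P.length ∧ j ≠ i ∧ |P.getD j 0| = |P.getD i 0|) ∧
  (∀ i, i % 2 = 0 → i + 1 < P.length →
      P.getD i 0 ≤ P.getD (i+1) 0 ∧ 0 < P.getD i 0 * P.getD (i+1) 0) ∧
  (∀ i, i % 2 = 0 → i + 1 < P.length →
      ¬ ∃ j < P.length,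
        (|P.getD i 0| < |P.getD j 0| ∧ |P.getD j 0| < |P.getD (i+1) 0|) ∨
        (|P.getD (i+1) 0| < |P.getD j 0| ∧ |P.getD j 0| < |P.getD i 0|))

-- Context directed excision: delete the first adjacent equal pair, if any.
open Classical in
noncomputable def cde (P : List ℤ) : List ℤ :=
  if h : ∃ i, i + 1 < P.length ∧ P.getD i 0 = P.getD (i+1) 0 then
    P.take (Nat.find h) ++ P.drop (Nat.find h + 2)
  else P

-- Context directed reversal: for the minimal i admitting j > i with
-- x i = -(x j) (and the minimal such j), reverse and negate the segment
-- from position i+1 through j.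
open Classical in
noncomputable def cdr (P : List ℤ) : List ℤ :=
  if h : ∃ i, ∃ j, i < j ∧ j < P.length ∧ P.getD i 0 = -(P.getD j 0) then
    let i := Nat.find h
    let j := Nat.find (Nat.find_spec h)
    P.take (i+1) ++ (((P.drop (i+1)).take (j - i)).reverse.map (fun z => -z)) ++
      P.drop (j+1)
  else P

-- Context directed block swap: for the lexicographically least (i, j)
-- admitting k, ℓ with i < j < k < ℓ, x i = x k, x j = x ℓ, interchange
-- the blocks x_{i+1}..x_{j-1} and x_k..x_ℓ.
open Classical in
noncomputable def cds (P : List ℤ) : List ℤ :=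
  if h : ∃ i, ∃ j, ∃ k, ∃ l, i < j ∧ j < k ∧ k < l ∧ l < P.length ∧
      P.getD i 0 = P.getD k 0 ∧ P.getD j 0 = P.getD l 0 then
    let i := Nat.find h
    let j := Nat.find (Nat.find_spec h)
    let k := Nat.find (Nat.find_spec (Nat.find_spec h))
    let l := Nat.find (Nat.find_spec (Nat.find_spec (Nat.find_spec h)))
    P.take (i+1) ++ ((P.drop k).take (l - k + 1)) ++ ((P.drop j).take (k - j)) ++
      ((P.drop (i+1)).take (j - i - 1)) ++ P.drop (l+1)
  else P

/-- The doubling map π: each entry z is replaced by (z, z+1) if z > 0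
and by (z-1, z) if z < 0. -/
def piMap (M : List ℤ) : List ℤ :=
  M.flatMap (fun z => if 0 < z then [z, z + 1] else [z - 1, z])

/-- One step of the HNS algorithm: apply cde if applicable, else cds if
applicable, else cdr. -/
noncomputable def hnsStep (P : List ℤ) : List ℤ :=
  if cde P ≠ P then cde P else if cds P ≠ P then cds P else cdr P

/-- entries with equal absolute value have the same sign iff
their indices have different parity. -/
theorem stmt0 (P : List ℤ) (hP : IsPointerList P) (i j : ℕ)
    (hi : i < P.length) (hj : j < P.length) (hij : i ≠ j)
    (habs : |P.getD i 0| = |P.getD j 0|) :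
    0 < P.getD i 0 * P.getD j 0 ↔ i % 2 ≠ j % 2 := by
  obtain ⟨h1, _, h3, h4, h5, h6, h7⟩ := hP
  exact key_lemma P.length (fun k => P.getD k 0) h1 h3 h4 h5 h6 h7 i j hi hj hij habs
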